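/- arXiv:1604.06980 — 2 statements merged into one kernel-verified Lean document; each statement's English description precedes it below -/
import Mathlib

section
/- Let ω₀ ∈ (0, π], m ∈ ℕ, M = {0, 1, ..., m}, and σ₀, ..., σ_m ≥ 0. For every function F from the set of maps (ℤ \ M) → ℂ to ℂ^{m+1} and every p ∈ {0, ..., m}, there exists a sequence x : ℤ → ℂ with Σ_{t∈ℤ} |t|^m |x(t)| < ∞ and |Σ_{t∈ℤ} (−it)^k e^{−iω₀t} x(t)| ≤ σ_k for all k ∈ {0, ..., m}, such that, setting η̃ = F(x restricted to ℤ \ M) − (x(0), ..., x(m)) ∈ ℂ^{m+1}, one has |(B(ω₀) · η̃)_p| ≥ σ_p. -/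
open Real

/-- The matrix `B(ω)` with entries `B(ω)_{p,k} = (-i k)^p e^{-iωk}`. -/
noncomputable def Bmat (m : ℕ) (ω : ℝ) : Matrix (Fin (m + 1)) (Fin (m + 1)) ℂ :=
  Matrix.of fun p k : Fin (m + 1) =>
    (-Complex.I * ((k : ℕ) : ℂ)) ^ (p : ℕ) * Complex.exp (-Complex.I * (ω : ℂ) * ((k : ℕ) : ℂ))

theorem minimax_lower_bound (ω₀ : ℝ) (hω₀ : ω₀ ∈ Set.Ioc 0 Real.pi) (m : ℕ)
    (σ : Fin (m + 1) → ℝ) (hσ : ∀ p, 0 ≤ σ p)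
    (F : ({t : ℤ // t ∉ Set.Icc (0 : ℤ) m} → ℂ) → (Fin (m + 1) → ℂ))
    (p : Fin (m + 1)) :
    ∃ x : ℤ → ℂ,
      (Summable fun t : ℤ => |(t : ℝ)| ^ m * ‖x t‖) ∧
      (∀ k : Fin (m + 1),
        ‖∑' t : ℤ, (-Complex.I * (t : ℂ)) ^ (k : ℕ) *
          Complex.exp (-Complex.I * (ω₀ : ℂ) * (t : ℂ)) * x t‖ ≤ σ k) ∧
      σ p ≤ ‖(Bmat m ω₀).mulVec
        (fun k : Fin (m + 1) =>
          F (fun t : {t : ℤ // t ∉ Set.Icc (0 : ℤ) m} => x (t : ℤ)) k - x ((k : ℕ) : ℤ)) p‖ := by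
  classical
  set z : Fin (m + 1) → ℂ := fun k => -Complex.I * ((k : ℕ) : ℂ) with hzdef
  have hzinj : Function.Injective z := by
    intro a b hab
    simp only [hzdef] at hab
    have h1 : ((a : ℕ) : ℂ) = ((b : ℕ) : ℂ) :=
      mul_left_cancel₀ (neg_ne_zero.mpr Complex.I_ne_zero) hab
    exact Fin.ext (Nat.cast_injective h1)
  have hB : Bmat m ω₀ = (Matrix.vandermonde z).transpose *
      Matrix.diagonal (fun k : Fin (m + 1) =>
        Complex.exp (-Complex.I * (ω₀ : ℂ) * ((k : ℕ) : ℂ))) := by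
    ext a b
    simp [Bmat, Matrix.mul_diagonal, Matrix.vandermonde, hzdef]
  have hdet : IsUnit (Bmat m ω₀).det := by
    rw [hB, Matrix.det_mul, Matrix.det_transpose, Matrix.det_vandermonde, Matrix.det_diagonal]
    refine IsUnit.mul (Ne.isUnit ?_) (Ne.isUnit ?_)
    · refine Finset.prod_ne_zero_iff.mpr fun i _ => Finset.prod_ne_zero_iff.mpr fun j hj => ?_
      exact sub_ne_zero_of_ne fun h => (ne_of_gt (Finset.mem_Ioi.mp hj)) (hzinj h)
    · exact Finset.prod_ne_zero_iff.mpr fun k _ => Complex.exp_ne_zero _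
  set η : Fin (m + 1) → ℂ :=
    (Bmat m ω₀)⁻¹.mulVec (fun k => if k = p then (σ p : ℂ) else 0) with hηdef
  have hBη : (Bmat m ω₀).mulVec η = fun k => if k = p then (σ p : ℂ) else 0 := by
    rw [hηdef, Matrix.mulVec_mulVec, Matrix.mul_nonsing_inv _ hdet, Matrix.one_mulVec]
  set e : Fin (m + 1) → ℤ := fun j => ((j : ℕ) : ℤ) with hedef
  have heinj : Function.Injective e := fun a b h => Fin.ext (Int.natCast_inj.mp h)
  have hrange : ∀ t : ℤ, t ∉ Set.Icc (0 : ℤ) m → t ∉ Set.range e := by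
    intro t ht hr
    obtain ⟨j, rfl⟩ := hr
    refine ht ⟨Int.natCast_nonneg _, ?_⟩
    show ((j : ℕ) : ℤ) ≤ (m : ℤ)
    exact_mod_cast Nat.le_of_lt_succ j.isLt
  have key : ∀ ε : ℂ, ‖ε‖ = 1 → ∃ x : ℤ → ℂ,
      (Summable fun t : ℤ => |(t : ℝ)| ^ m * ‖x t‖) ∧
      (∀ k : Fin (m + 1),
        ‖∑' t : ℤ, (-Complex.I * (t : ℂ)) ^ (k : ℕ) *
          Complex.exp (-Complex.I * (ω₀ : ℂ) * (t : ℂ)) * x t‖ ≤ σ k) ∧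
      (∀ k : Fin (m + 1), x ((k : ℕ) : ℤ) = ε * η k) ∧
      ((fun t : {t : ℤ // t ∉ Set.Icc (0 : ℤ) m} => x (t : ℤ)) = fun _ => 0) := by
    intro ε hε
    set x : ℤ → ℂ := Function.extend e (fun j => ε * η j) 0 with hxdef
    have hx0 : ∀ t : ℤ, t ∉ Set.range e → x t = 0 := by
      intro t ht
      rw [hxdef, Function.extend_apply' _ _ _ (fun ⟨j, hj⟩ => ht ⟨j, hj⟩)]
      rfl
    have hxe : ∀ j : Fin (m + 1), x (e j) = ε * η j := fun j => heinj.extend_apply _ _ _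
    have htsum : ∀ k : Fin (m + 1),
        (∑' t : ℤ, (-Complex.I * (t : ℂ)) ^ (k : ℕ) *
          Complex.exp (-Complex.I * (ω₀ : ℂ) * (t : ℂ)) * x t)
        = ε * (if k = p then (σ p : ℂ) else 0) := by
      intro k
      set f : ℤ → ℂ := fun t => (-Complex.I * (t : ℂ)) ^ (k : ℕ) *
        Complex.exp (-Complex.I * (ω₀ : ℂ) * (t : ℂ)) * x t with hfdef
      have hsupp : Function.support f ⊆ Set.range e := by
        intro t ht
        by_contra hr
        exact ht (by rw [hfdef]; simp [hx0 t hr])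
      rw [← heinj.tsum_eq hsupp, tsum_fintype]
      have : ∀ j : Fin (m + 1), f (e j) = ε * (Bmat m ω₀ k j * η j) := by
        intro j
        rw [hfdef]
        have hxj : x ((j : ℕ) : ℤ) = ε * η j := hxe j
        simp only [hedef, hxe j, hxj, Bmat, Matrix.of_apply]
        push_cast
        ring
      rw [Finset.sum_congr rfl fun j _ => this j, ← Finset.mul_sum]
      congr 1
      have := congrFun hBη k
      rw [← this]
      rfl
    refine ⟨x, ?_, ?_, ?_, ?_⟩
    · apply summable_of_ne_finset_zero (s := Finset.image e Finset.univ)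
      intro t ht
      have : t ∉ Set.range e := by
        intro ⟨j, hj⟩
        exact ht (Finset.mem_image.mpr ⟨j, Finset.mem_univ _, hj⟩)
      rw [hx0 t this]
      simp
    · intro k
      rw [htsum k]
      rw [norm_mul, hε, one_mul]
      by_cases hkp : k = p
      · subst hkp; simp [abs_of_nonneg (hσ k)]
      · simp [hkp, hσ k]
    · intro k
      exact hxe k
    · funext t
      exact hx0 t.1 (hrange t.1 t.2)
  obtain ⟨x₁, h1s, h1b, h1v, h1r⟩ := key 1 (by simp)
  obtain ⟨x₂, h2s, h2b, h2v, h2r⟩ := key (-1) (by simp)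
  set v : Fin (m + 1) → ℂ := F (fun _ => 0) with hvdef
  set a : ℂ := (Bmat m ω₀).mulVec v p with hadef
  have hval1 : (Bmat m ω₀).mulVec
      (fun k => F (fun t : {t : ℤ // t ∉ Set.Icc (0 : ℤ) m} => x₁ (t : ℤ)) k - x₁ ((k : ℕ) : ℤ)) p
      = a - σ p := by
    have : (fun k => F (fun t : {t : ℤ // t ∉ Set.Icc (0 : ℤ) m} => x₁ (t : ℤ)) k
        - x₁ ((k : ℕ) : ℤ)) = v - η := by
      funext k
      rw [h1r, h1v k, one_mul]
      rfl
    rw [this, Matrix.mulVec_sub]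
    have := congrFun hBη p
    simp only [Pi.sub_apply, this, if_pos rfl, hadef]
    norm_num
  have hval2 : (Bmat m ω₀).mulVec
      (fun k => F (fun t : {t : ℤ // t ∉ Set.Icc (0 : ℤ) m} => x₂ (t : ℤ)) k - x₂ ((k : ℕ) : ℤ)) p
      = a + σ p := by
    have : (fun k => F (fun t : {t : ℤ // t ∉ Set.Icc (0 : ℤ) m} => x₂ (t : ℤ)) k
        - x₂ ((k : ℕ) : ℤ)) = v + η := by
      funext k
      rw [h2r, h2v k]
      simp only [neg_one_mul, sub_neg_eq_add]
      rfl
    rw [this, Matrix.mulVec_add]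
    have := congrFun hBη p
    simp only [Pi.add_apply, this, if_pos rfl, hadef]
    norm_num
  by_cases hc : σ p ≤ ‖a - (σ p : ℂ)‖
  · exact ⟨x₁, h1s, h1b, by rw [hval1]; exact hc⟩
  · refine ⟨x₂, h2s, h2b, ?_⟩
    rw [hval2]
    push_neg at hc
    have h2σ : ‖(a + σ p) - (a - σ p)‖ = 2 * σ p := by
      have : (a + (σ p : ℂ)) - (a - σ p) = 2 * σ p := by ring
      rw [this, norm_mul]
      simp [abs_of_nonneg (hσ p)]
    have := norm_sub_norm_le ((a + (σ p : ℂ)) - (a - σ p)) (a - (σ p : ℂ) - (a - σ p) + (a - σ p))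
    nlinarith [norm_sub_le (a + (σ p : ℂ)) (a - σ p), norm_add_le ((a + (σ p : ℂ)) - (a - σ p)) (a - (σ p : ℂ)), h2σ, norm_nonneg (a + (σ p : ℂ)), hc]
end

section
/- Let ω₀ ∈ (0, π], m ∈ ℕ, M = {0, 1, ..., m}, and let x : ℤ → ℂ satisfy Σ_{t∈ℤ} |t|^m |x(t)| < ∞. Let x̂ be the unique sequence with x̂(t) = x(t) for t ∈ ℤ \ M and Σ_{t∈ℤ} (−it)^p e^{−iω₀t} x̂(t) = 0 for all p ∈ {0, ..., m}. Then max_{0 ≤ k ≤ m} |x̂(k)| ≤ ‖B(ω₀)^{−1}‖_{∞→∞} · Σ_{t∈ℤ\M} |t|^m |x(t)|, where ‖·‖_{∞→∞} denotes the operator norm of a matrix acting on ℂ^{m+1} equipped with the supremum norm (i.e., the maximum absolute row sum). In particular, for m = 0 one has |x̂(0)| ≤ Σ_{t∈ℤ, t≠0} |x(t)|. -/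
open Real

/-- The `ℓ∞ → ℓ∞` operator norm of a matrix: the maximum absolute row sum. -/
noncomputable def linftyNorm {n : ℕ} (B : Matrix (Fin (n + 1)) (Fin (n + 1)) ℂ) : ℝ :=
  Finset.univ.sup' ⟨0, Finset.mem_univ 0⟩ fun p : Fin (n + 1) => ∑ k : Fin (n + 1), ‖B p k‖

lemma bmat_det_isUnit (m : ℕ) (ω : ℝ) : IsUnit (Bmat m ω).det := by
  have hB : Bmat m ω = Matrix.transpose (Matrix.vandermonde fun k : Fin (m+1) => -Complex.I * ((k:ℕ) : ℂ)) *
      Matrix.diagonal (fun k : Fin (m+1) => Complex.exp (-Complex.I * (ω:ℂ) * ((k:ℕ) : ℂ))) := by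
    ext p k
    simp [Bmat, Matrix.mul_diagonal, Matrix.vandermonde, Matrix.transpose_apply]
  rw [hB, Matrix.det_mul, Matrix.det_transpose, Matrix.det_vandermonde, Matrix.det_diagonal]
  apply IsUnit.mul <;> rw [isUnit_iff_ne_zero]
  · apply Finset.prod_ne_zero_iff.mpr
    intro i _
    apply Finset.prod_ne_zero_iff.mpr
    intro j hj
    have hij : i < j := Finset.mem_Ioi.mp hj
    have hne : ((j:ℕ):ℂ) ≠ ((i:ℕ):ℂ) := by
      have h2 : (j:ℕ) ≠ (i:ℕ) := fun h => absurd (Fin.ext h) hij.ne'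
      exact_mod_cast h2
    intro h
    apply hne
    have h2 : -Complex.I * (((j:ℕ):ℂ) - ((i:ℕ):ℂ)) = 0 := by linear_combination h
    rcases mul_eq_zero.mp h2 with h3 | h3
    · exact absurd (neg_eq_zero.mp h3) Complex.I_ne_zero
    · exact sub_eq_zero.mp h3
  · exact Finset.prod_ne_zero_iff.mpr fun k _ => Complex.exp_ne_zero _

lemma summable_of_eq_off_finset {α : Type*} [AddCommGroup α] [TopologicalSpace α]
    [IsTopologicalAddGroup α] {f g : ℤ → α} (hg : Summable g) (s : Finset ℤ)
    (h : ∀ t ∉ s, f t = g t) : Summable f := by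
  have hfg : Summable (f - g) :=
    summable_of_ne_finset_zero (s := s) (fun t ht => by simp [Pi.sub_apply, h t ht])
  simpa using hfg.add hg

theorem recovered_values_sup_bound (ω₀ : ℝ) (hω₀ : ω₀ ∈ Set.Ioc 0 Real.pi) (m : ℕ)
    (x : ℤ → ℂ) (hx : Summable fun t : ℤ => |(t : ℝ)| ^ m * ‖x t‖)
    (xh : ℤ → ℂ)
    (hagree : ∀ t : ℤ, t ∉ Set.Icc (0 : ℤ) m → xh t = x t)
    (hdeg : ∀ p : Fin (m + 1),
      ∑' t : ℤ, (-Complex.I * (t : ℂ)) ^ (p : ℕ) *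
        Complex.exp (-Complex.I * (ω₀ : ℂ) * (t : ℂ)) * xh t = 0) :
    (∀ k : Fin (m + 1),
      ‖xh ((k : ℕ) : ℤ)‖ ≤
        linftyNorm ((Bmat m ω₀)⁻¹) *
          ∑' t : {t : ℤ // t ∉ Set.Icc (0 : ℤ) m}, |((t : ℤ) : ℝ)| ^ m * ‖x (t : ℤ)‖) ∧
    (m = 0 → ‖xh 0‖ ≤ ∑' t : {t : ℤ // t ≠ 0}, ‖x (t : ℤ)‖) := by
  classical
  set Mf : Finset ℤ := Finset.Icc (0 : ℤ) (m : ℤ) with hMf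
  have hMfmem : ∀ t : ℤ, t ∉ Mf ↔ t ∉ Set.Icc (0:ℤ) (m:ℤ) := by
    intro t; simp [hMf, Finset.mem_Icc, Set.mem_Icc]
  set F : Fin (m+1) → ℤ → ℂ := fun p t =>
    (-Complex.I * (t : ℂ)) ^ (p : ℕ) * Complex.exp (-Complex.I * (ω₀ : ℂ) * (t : ℂ)) * xh t
    with hF
  have hnorm : ∀ (p : Fin (m+1)) (t : ℤ), ‖F p t‖ = |(t:ℝ)| ^ (p:ℕ) * ‖xh t‖ := by
    intro p t
    simp [hF, norm_mul, norm_pow, Complex.norm_exp, Complex.mul_re, Complex.mul_im]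
  -- summability
  have hxm : Summable fun t : ℤ => |(t:ℝ)|^m * ‖xh t‖ := by
    apply summable_of_eq_off_finset hx Mf
    intro t ht
    rw [hagree t ((hMfmem t).mp ht)]
  have hple : ∀ p : Fin (m+1), (p:ℕ) ≤ m := fun p => Nat.lt_succ_iff.mp p.isLt
  have habs1 : ∀ t : ℤ, t ≠ 0 → (1:ℝ) ≤ |(t:ℝ)| := by
    intro t ht
    have : (1:ℤ) ≤ |t| := Int.one_le_abs (by exact_mod_cast ht)
    calc (1:ℝ) ≤ ((|t|:ℤ):ℝ) := by exact_mod_cast this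
    _ = |(t:ℝ)| := by push_cast; ring
  have hpowle : ∀ (p : Fin (m+1)) (t : ℤ), t ≠ 0 → |(t:ℝ)|^(p:ℕ) ≤ |(t:ℝ)|^m :=
    fun p t ht => pow_le_pow_right₀ (habs1 t ht) (hple p)
  have hsum_p : ∀ p : Fin (m+1), Summable fun t : ℤ => |(t:ℝ)|^(p:ℕ) * ‖xh t‖ := by
    intro p
    have hg : Summable fun t : ℤ =>
        if t = 0 then (0:ℝ) else |(t:ℝ)|^(p:ℕ) * ‖xh t‖ := by
      apply Summable.of_nonneg_of_le _ _ hxm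
      · intro t; split <;> positivity
      · intro t
        by_cases ht : t = 0
        · simp only [ht, if_true]; positivity
        · simp only [ht, if_false]
          exact mul_le_mul_of_nonneg_right (hpowle p t ht) (norm_nonneg _)
    apply summable_of_eq_off_finset hg {0}
    intro t ht
    simp only [Finset.mem_singleton] at ht
    simp [ht]
  have hFnorm : ∀ p : Fin (m+1), Summable fun t : ℤ => ‖F p t‖ :=
    fun p => (hsum_p p).congr fun t => (hnorm p t).symm
  have hFsum : ∀ p : Fin (m+1), Summable (F p) := fun p => (hFnorm p).of_norm
  -- reindexing of the finite part
  have hemb : Function.Injective (fun k : Fin (m+1) => ((k:ℕ):ℤ)) := by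
    intro a b h
    change ((a:ℕ):ℤ) = ((b:ℕ):ℤ) at h
    exact Fin.ext (by exact_mod_cast h)
  have hmap : Mf = Finset.map ⟨fun k : Fin (m+1) => ((k:ℕ):ℤ), hemb⟩ Finset.univ := by
    ext t
    simp only [hMf, Finset.mem_Icc, Finset.mem_map, Finset.mem_univ, true_and,
      Function.Embedding.coeFn_mk]
    constructor
    · rintro ⟨h0, hmt⟩
      refine ⟨⟨t.toNat, by omega⟩, by simp [Int.toNat_of_nonneg h0]⟩
    · rintro ⟨k, rfl⟩
      have := k.isLt
      omega
  -- linear system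
  set v : Fin (m+1) → ℂ := fun k => xh ((k:ℕ):ℤ) with hv
  set c : Fin (m+1) → ℂ := fun p => -∑' t : {t : ℤ // t ∉ Mf}, F p t with hc
  have hBv : (Bmat m ω₀).mulVec v = c := by
    funext p
    have hsplit : (∑ t ∈ Mf, F p t) + ∑' t : {t : ℤ // t ∉ Mf}, F p t = 0 := by
      rw [Summable.sum_add_tsum_subtype_compl (hFsum p) Mf]
      exact hdeg p
    have h1 : ∑ t ∈ Mf, F p t = ∑ k : Fin (m+1), Bmat m ω₀ p k * v k := by
      rw [hmap, Finset.sum_map]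
      apply Finset.sum_congr rfl
      intro k _
      simp only [Function.Embedding.coeFn_mk, hF, hv, Bmat, Matrix.of_apply]
      push_cast
      ring
    have h2 : ((Bmat m ω₀).mulVec v) p = ∑ k : Fin (m+1), Bmat m ω₀ p k * v k := by
      simp [Matrix.mulVec, dotProduct]
    rw [h2, ← h1, hc]
    linear_combination hsplit
  have hBdet := bmat_det_isUnit m ω₀
  have hveq : v = ((Bmat m ω₀)⁻¹).mulVec c := by
    rw [← hBv, Matrix.mulVec_mulVec, Matrix.nonsing_inv_mul _ hBdet, Matrix.one_mulVec]
  set S : ℝ := ∑' t : {t : ℤ // t ∉ Mf}, |((t:ℤ):ℝ)|^m * ‖x (t:ℤ)‖ with hS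
  have hxsub : Summable fun t : {t : ℤ // t ∉ Mf} => |((t:ℤ):ℝ)|^m * ‖x (t:ℤ)‖ :=
    hx.comp_injective Subtype.coe_injective
  have hS0 : 0 ≤ S := tsum_nonneg (fun t => by positivity)
  have hcS : ∀ p : Fin (m+1), ‖c p‖ ≤ S := by
    intro p
    rw [hc]
    dsimp only
    rw [norm_neg]
    refine (norm_tsum_le_tsum_norm ((hFnorm p).comp_injective Subtype.coe_injective)).trans ?_
    apply Summable.tsum_le_tsum _ ((hFnorm p).comp_injective Subtype.coe_injective) hxsub
    intro t
    have ht0 : (t:ℤ) ≠ 0 := by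
      intro h0
      exact t.2 (by rw [h0]; simp [hMf])
    show ‖F p (t:ℤ)‖ ≤ _
    rw [hnorm p (t:ℤ), hagree (t:ℤ) ((hMfmem (t:ℤ)).mp t.2)]
    exact mul_le_mul_of_nonneg_right (hpowle p (t:ℤ) ht0) (norm_nonneg _)
  have hmain : ∀ k : Fin (m+1), ‖xh ((k:ℕ):ℤ)‖ ≤ linftyNorm ((Bmat m ω₀)⁻¹) * S := by
    intro k
    have h0 : ‖xh ((k:ℕ):ℤ)‖ = ‖∑ j : Fin (m+1), (Bmat m ω₀)⁻¹ k j * c j‖ := by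
      have hk := congrFun hveq k
      rw [show xh ((k:ℕ):ℤ) = v k from rfl, hk]
      simp [Matrix.mulVec, dotProduct]
    rw [h0]
    calc ‖∑ j : Fin (m+1), (Bmat m ω₀)⁻¹ k j * c j‖
        ≤ ∑ j : Fin (m+1), ‖(Bmat m ω₀)⁻¹ k j * c j‖ := norm_sum_le _ _
      _ ≤ ∑ j : Fin (m+1), ‖(Bmat m ω₀)⁻¹ k j‖ * S := by
          apply Finset.sum_le_sum
          intro j _
          rw [norm_mul]
          exact mul_le_mul_of_nonneg_left (hcS j) (norm_nonneg _)
      _ = (∑ j : Fin (m+1), ‖(Bmat m ω₀)⁻¹ k j‖) * S := by rw [Finset.sum_mul]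
      _ ≤ linftyNorm ((Bmat m ω₀)⁻¹) * S := by
          apply mul_le_mul_of_nonneg_right _ hS0
          exact Finset.le_sup' (fun p : Fin (m+1) => ∑ j : Fin (m+1), ‖(Bmat m ω₀)⁻¹ p j‖)
            (Finset.mem_univ k)
  have hSeq : (∑' t : {t : ℤ // t ∉ Set.Icc (0:ℤ) (m:ℤ)}, |((t:ℤ):ℝ)|^m * ‖x (t:ℤ)‖) = S := by
    rw [hS, ← Equiv.tsum_eq (Equiv.subtypeEquivRight (fun t => (hMfmem t).symm))
      (fun t : {t : ℤ // t ∉ Mf} => |((t:ℤ):ℝ)|^m * ‖x (t:ℤ)‖)]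
    exact tsum_congr fun t => by rw [Equiv.subtypeEquivRight_apply]
  constructor
  · intro k
    rw [hSeq]
    exact hmain k
  · intro hm
    subst hm
    have hB1 : Bmat 0 ω₀ = 1 := by
      ext p k
      fin_cases p <;> fin_cases k
      simp [Bmat, Matrix.one_apply]
    have hlin : linftyNorm ((Bmat 0 ω₀)⁻¹) = 1 := by
      rw [hB1, inv_one]
      simp [linftyNorm, Matrix.one_apply]
    have hk0 : ‖xh 0‖ ≤ S := by
      have h := hmain 0
      rw [hlin] at h
      simpa using h
    have hSeq2 : (∑' t : {t : ℤ // t ≠ 0}, ‖x (t:ℤ)‖) = S := by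
      rw [hS, ← Equiv.tsum_eq (Equiv.subtypeEquivRight
          (fun t : ℤ => show t ≠ 0 ↔ t ∉ Mf by simp [hMf, Finset.mem_Icc]))
        (fun t : {t : ℤ // t ∉ Mf} => |((t:ℤ):ℝ)|^(0:ℕ) * ‖x (t:ℤ)‖)]
      apply tsum_congr
      intro t
      rw [Equiv.subtypeEquivRight_apply]
      simp
    rw [hSeq2]
    exact hk0
end
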